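/- arXiv:2112.01623 — 2 statements merged into one kernel-verified Lean document; each statement's English description precedes it below -/
import Mathlib

section
/- Let J > 0, h > 0, let R₀ ∈ SO(3), and let ω, M ∈ ℝ³ satisfy h² ‖ω + (h/(2J)) M‖² < 1. Define the incremental rescaled-Rodrigues vector Δα := (2h/(1 + √(1 − h²‖ω + (h/(2J))M‖²))) R₀ (ω + (h/(2J)) M) and set R₁ := R(Δα) R₀. Then the discrete Legendre (angular momentum) equation holds: (1/h)[R₀ᵀ R₁ (J/2) − (J/2) R₁ᵀ R₀] − (h/2) S(M) = S(J ω). In other words, Δα is an explicit closed-form solution of the implicit equation h(Jω + (h/2)M) = 4J R₀ᵀ Δα/(4 + ‖Δα‖²). -/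
open Matrix

noncomputable section

/-- Vectors in ℝ³ with the Euclidean norm. -/
abbrev V3 : Type := EuclideanSpace ℝ (Fin 3)

/-- 3×3 real matrices. -/
abbrev M3 : Type := Matrix (Fin 3) (Fin 3) ℝ

/-- Cross-product (skew-symmetric) matrix of a vector: `S a *ᵥ v = a ×₃ v`. -/
def S (a : V3) : M3 := !![0, -a 2, a 1; a 2, 0, -a 0; -a 1, a 0, 0]

/-- Rescaled-Rodrigues rotation matrix `R(α) = I + (4/(4+‖α‖²))(S(α) + (1/2)S(α)²)`. -/
def Rot (α : V3) : M3 := 1 + (4 / (4 + ‖α‖ ^ 2)) • (S α + (1 / 2 : ℝ) • (S α * S α))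

/-- Action of a matrix on a vector. -/
def mulV (A : M3) (v : V3) : V3 := WithLp.toLp 2 (A.mulVec v)

lemma S_smul (c : ℝ) (a : V3) : S (c • a) = c • S a := by
  simp only [S]; ext i j
  fin_cases i <;> fin_cases j <;> simp [PiLp.smul_apply] <;> ring

lemma S_add (a b : V3) : S (a + b) = S a + S b := by
  simp only [S]; ext i j
  fin_cases i <;> fin_cases j <;> simp [PiLp.add_apply] <;> ring

lemma S_transpose (a : V3) : (S a)ᵀ = -S a := by
  simp only [S]; ext i j
  fin_cases i <;> fin_cases j <;> simp

lemma norm_sq_mulV (Q : M3) (hQ : Qᵀ * Q = 1) (u : V3) :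
    ‖mulV Q u‖ ^ 2 = ‖u‖ ^ 2 := by
  have h := fun i j => congrFun (congrFun hQ i) j
  simp only [Matrix.mul_apply, Matrix.transpose_apply, Fin.sum_univ_three] at h
  have h00 := h 0 0; have h01 := h 0 1; have h02 := h 0 2
  have h11 := h 1 1; have h12 := h 1 2; have h22 := h 2 2
  simp [Matrix.one_apply] at h00 h01 h02 h11 h12 h22
  rw [EuclideanSpace.norm_eq, EuclideanSpace.norm_eq,
    Real.sq_sqrt (by positivity), Real.sq_sqrt (by positivity)]
  simp only [mulV, Fin.sum_univ_three, Matrix.mulVec, dotProduct, WithLp.ofLp_toLp, Real.norm_eq_abs, sq_abs]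
  linear_combination u 0^2*h00 + u 1^2*h11 + u 2^2*h22 + 2*u 0*u 1*h01 + 2*u 0*u 2*h02 + 2*u 1*u 2*h12

lemma conjS (Q : M3) (hQ : Qᵀ * Q = 1) (hd : Q.det = 1) (w : V3) :
    Q * S w * Qᵀ = S (mulV Q w) := by
  have hadj : Qᵀ = Q.adjugate := by
    have h3 : Q * Q.adjugate = 1 := by rw [Matrix.mul_adjugate, hd, one_smul]
    calc Qᵀ = Qᵀ * (Q * Q.adjugate) := by rw [h3, Matrix.mul_one]
    _ = (Qᵀ * Q) * Q.adjugate := by rw [Matrix.mul_assoc]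
    _ = Q.adjugate := by rw [hQ, Matrix.one_mul]
  rw [Matrix.adjugate_fin_three] at hadj
  have e := fun i j => congrFun (congrFun hadj i) j
  simp only [Matrix.transpose_apply] at e
  have e00 := e 0 0; have e01 := e 0 1; have e02 := e 0 2
  have e10 := e 1 0; have e11 := e 1 1; have e12 := e 1 2
  have e20 := e 2 0; have e21 := e 2 1; have e22 := e 2 2
  simp only [Matrix.cons_val', Matrix.cons_val_zero, Matrix.cons_val_one, Matrix.head_cons,
    Matrix.empty_val', Matrix.cons_val_fin_one, Matrix.head_fin_const, Matrix.cons_val_two,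
    Matrix.tail_cons, Matrix.of_apply] at e00 e01 e02 e10 e11 e12 e20 e21 e22
  ext i j
  fin_cases i <;> fin_cases j <;>
    simp only [S, mulV, Matrix.mulVec, dotProduct, WithLp.ofLp_toLp, Fin.sum_univ_three,
      Matrix.mul_apply, Matrix.transpose_apply, Fin.zero_eta, Fin.mk_one, Fin.reduceFinMk,
      Fin.isValue, Matrix.cons_val', Matrix.cons_val_zero, Matrix.cons_val_one, Matrix.head_cons,
      Matrix.empty_val', Matrix.cons_val_fin_one, Matrix.head_fin_const, Matrix.cons_val_two,
      Matrix.tail_cons, Matrix.of_apply]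
  · ring
  · linear_combination w 0 * e02 + w 1 * e12 + w 2 * e22
  · linear_combination (-(w 0) * e01) - w 1 * e11 - w 2 * e21
  · linear_combination (-(w 0) * e02) - w 1 * e12 - w 2 * e22
  · ring
  · linear_combination w 0 * e00 + w 1 * e10 + w 2 * e20
  · linear_combination w 0 * e01 + w 1 * e11 + w 2 * e21
  · linear_combination (-(w 0) * e00) - w 1 * e10 - w 2 * e20
  · ring

/-- The explicit incremental rescaled-Rodrigues vector Δα solves the discrete
Legendre (angular momentum) equation, with J_d = (J/2)·I for a spherical body:
(1/h)[R₀ᵀ R₁ (J/2) − (J/2) R₁ᵀ R₀] − (h/2) S(M) = S(J ω), equivalently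
h(Jω + (h/2)M) = 4J R₀ᵀ Δα/(4 + ‖Δα‖²). -/
theorem stmt6 (J h : ℝ) (hJ : 0 < J) (hh : 0 < h)
    (R₀ : M3) (hR₀ : R₀ᵀ * R₀ = 1 ∧ R₀.det = 1)
    (ω M : V3) (hsmall : h ^ 2 * ‖ω + (h / (2 * J)) • M‖ ^ 2 < 1)
    (Δα : V3)
    (hΔα : Δα = (2 * h / (1 + Real.sqrt (1 - h ^ 2 * ‖ω + (h / (2 * J)) • M‖ ^ 2))) •
      mulV R₀ (ω + (h / (2 * J)) • M))
    (R₁ : M3) (hR₁ : R₁ = Rot Δα * R₀) :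
    (1 / h) • ((J / 2) • (R₀ᵀ * R₁) - (J / 2) • (R₁ᵀ * R₀)) - (h / 2) • S M = S (J • ω) ∧
    h • (J • ω + (h / 2) • M) = (4 * J / (4 + ‖Δα‖ ^ 2)) • mulV R₀ᵀ Δα := by
  obtain ⟨hQ, hd⟩ := hR₀
  have hQ2 : R₀ * R₀ᵀ = 1 := mul_eq_one_comm.mp hQ
  set u : V3 := ω + (h / (2 * J)) • M with hu
  obtain ⟨t, htdef⟩ : ∃ t', t' = ‖u‖ ^ 2 := ⟨_, rfl⟩
  rw [← htdef] at hsmall hΔα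
  have ht : 0 ≤ t := htdef ▸ (by positivity)
  have h1t : 0 ≤ 1 - h ^ 2 * t := by nlinarith [hsmall]
  obtain ⟨s, hsdef⟩ : ∃ s', s' = Real.sqrt (1 - h ^ 2 * t) := ⟨_, rfl⟩
  rw [← hsdef] at hΔα
  have hs0 : 0 ≤ s := hsdef ▸ Real.sqrt_nonneg _
  have hssq : s ^ 2 = 1 - h ^ 2 * t := hsdef ▸ Real.sq_sqrt h1t
  have hs1 : (0:ℝ) < 1 + s := by linarith
  obtain ⟨c, hcdef⟩ : ∃ c', c' = 2 * h / (1 + s) := ⟨_, rfl⟩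
  rw [← hcdef] at hΔα
  have key : 4 * c = h * (4 + c ^ 2 * t) := by
    rw [hcdef]; field_simp; linear_combination (-4) * hssq
  have hnorm : ‖Δα‖ ^ 2 = c ^ 2 * t := by
    rw [hΔα, norm_smul, mul_pow, norm_sq_mulV R₀ hQ u, Real.norm_eq_abs, sq_abs, htdef]
  have hpos : (0:ℝ) < 4 + c ^ 2 * t := by positivity
  have hRtD : mulV R₀ᵀ Δα = c • u := by
    rw [hΔα]
    simp only [mulV, WithLp.ofLp_smul, WithLp.ofLp_toLp]
    rw [Matrix.mulVec_smul, Matrix.mulVec_mulVec, hQ, Matrix.one_mulVec]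
    rfl
  have hconj : R₀ᵀ * S Δα * R₀ = c • S u := by
    have h4 := conjS R₀ᵀ (by rw [Matrix.transpose_transpose]; exact hQ2)
      (by rw [Matrix.det_transpose]; exact hd) Δα
    rw [Matrix.transpose_transpose] at h4
    rw [h4, hRtD, S_smul]
  obtain ⟨k, hkdef⟩ : ∃ k', k' = 4 / (4 + ‖Δα‖ ^ 2) := ⟨_, rfl⟩
  have hdiff : Rot Δα - (Rot Δα)ᵀ = (2 * k) • S Δα := by
    rw [hkdef, Rot, Matrix.transpose_add, Matrix.transpose_one, Matrix.transpose_smul,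
      Matrix.transpose_add, Matrix.transpose_smul, Matrix.transpose_mul, S_transpose,
      neg_mul_neg]
    module
  have hexpand : (J / 2) • (R₀ᵀ * R₁) - (J / 2) • (R₁ᵀ * R₀) = (J * k * c) • S u := by
    rw [hR₁, Matrix.transpose_mul, ← smul_sub]
    have h5 : R₀ᵀ * (Rot Δα * R₀) - R₀ᵀ * (Rot Δα)ᵀ * R₀
        = R₀ᵀ * (Rot Δα - (Rot Δα)ᵀ) * R₀ := by noncomm_ring
    rw [h5, hdiff, Matrix.mul_smul, Matrix.smul_mul, hconj, smul_smul, smul_smul]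
    congr 1
    ring
  have hkc : k * c = h := by
    rw [hkdef, hnorm, div_mul_eq_mul_div, eq_comm, eq_div_iff (by positivity)]
    exact key.symm
  constructor
  · rw [hexpand, hu, S_add, S_smul, S_smul]
    match_scalars
    · field_simp
      linear_combination hkc
    · field_simp
      linear_combination hkc
  · rw [hRtD, hnorm, hu]
    match_scalars
    · field_simp
      linear_combination (-1) * key
    · field_simp
      linear_combination (-1) * key
end
end

section
/- Let n ≥ 1, let mᵢ > 0 for i = 1,…,n, and let U : (ℝ³)ⁿ → ℝ be differentiable and invariant under rotations: U(Q x₁, …, Q xₙ) = U(x₁, …, xₙ) for every Q ∈ SO(3). Define Fᵢ(x) = −∇_{xᵢ} U(x). Let h > 0 and let sequences x_{i,k}, v_{i,k} ∈ ℝ³ (k ∈ ℕ) evolve by the velocity Verlet (explicit Newmark) map: x_{i,k+1} = x_{i,k} + h v_{i,k} + (h²/(2mᵢ)) Fᵢ(x_k) and v_{i,k+1} = v_{i,k} + (h/(2mᵢ))(Fᵢ(x_k) + Fᵢ(x_{k+1})). Then the total angular momentum is exactly conserved: Σᵢ mᵢ x_{i,k} × v_{i,k} = Σᵢ mᵢ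 x_{i,0} × v_{i,0} for all k. -/
open Matrix

noncomputable section

lemma normsq (a : V3) : ‖a‖ ^ 2 = a 0 ^ 2 + a 1 ^ 2 + a 2 ^ 2 := by
  rw [EuclideanSpace.norm_eq, Real.sq_sqrt (by positivity)]
  simp [Fin.sum_univ_three, sq_abs]

lemma S_cube (a : V3) : S a * S a * S a = -(‖a‖ ^ 2 • S a) := by
  rw [normsq]
  ext i j
  fin_cases i <;> fin_cases j <;>
    · simp [S, Matrix.mul_apply, Fin.sum_univ_three]
      ring

lemma key (M : M3) (s c : ℝ) (h3 : M * M * M = -(s • M)) (hc : c * (4 + s) = 4) :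
    (1 - c • M + (c/2) • (M*M)) * (1 + c • M + (c/2) • (M*M)) = 1 := by
  have h3r : M * (M * M) = -(s • M) := by rw [← mul_assoc, h3]
  simp only [add_mul, mul_add, sub_mul, mul_sub, smul_mul_assoc, mul_smul_comm, smul_smul,
    mul_one, one_mul, mul_assoc, mul_neg, smul_neg, h3r]
  match_scalars <;> (try ring) <;> (try linear_combination (-((4/(4+s))/4)) * hc) <;>
    (try linear_combination (-(c/4)) * hc) <;> (try linear_combination (-(c/2)) * hc)

lemma Rot_eq' (α : V3) :
    Rot α = 1 + (4 / (4 + ‖α‖ ^ 2)) • S α + ((4 / (4 + ‖α‖ ^ 2))/2) • (S α * S α) := by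
  rw [Rot, smul_add, smul_smul, ← add_assoc, mul_one_div]

lemma Rot_orth (α : V3) : (Rot α)ᵀ * Rot α = 1 := by
  have hne : (4:ℝ) + ‖α‖ ^ 2 ≠ 0 := by positivity
  have hc : (4 / (4 + ‖α‖ ^ 2)) * (4 + ‖α‖ ^ 2) = 4 := div_mul_cancel₀ 4 hne
  have hRT : (Rot α)ᵀ = 1 - (4 / (4 + ‖α‖ ^ 2)) • S α
      + ((4 / (4 + ‖α‖ ^ 2))/2) • (S α * S α) := by
    rw [Rot_eq']
    simp [transpose_add, transpose_smul, transpose_one, transpose_mul, S_transpose,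
      neg_mul_neg, smul_neg, sub_eq_add_neg]
  rw [hRT, Rot_eq']
  exact key (S α) (‖α‖ ^ 2) _ (S_cube α) hc

lemma det_helper (a0 a1 a2 : ℝ) :
    Matrix.det (1 + (4/(4+(a0^2+a1^2+a2^2))) •
      ((!![0,-a2,a1;a2,0,-a0;-a1,a0,0] : M3) +
        (1/2:ℝ) • (!![0,-a2,a1;a2,0,-a0;-a1,a0,0] * !![0,-a2,a1;a2,0,-a0;-a1,a0,0]))) = 1 := by
  have hne : 4 + (a0^2+a1^2+a2^2) ≠ 0 := by positivity
  rw [Matrix.det_fin_three]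
  simp [Matrix.add_apply, Matrix.smul_apply, Matrix.one_apply, Matrix.mul_apply,
    Fin.sum_univ_three]
  field_simp
  ring

lemma Rot_det (α : V3) : (Rot α).det = 1 := by
  have := det_helper (α 0) (α 1) (α 2)
  rw [Rot, normsq α, S]
  exact this

lemma S_smul_s12 (t : ℝ) (ω : V3) : S (t • ω) = t • S ω := by
  ext i j
  fin_cases i <;> fin_cases j <;> simp [S]

lemma Rot_smul_apply (ω : V3) (t : ℝ) (i j : Fin 3) :
    Rot (t • ω) i j = (1 : M3) i j
      + 4 / (4 + t^2 * ‖ω‖^2) * (t * S ω i j + t^2/2 * ((S ω * S ω) i j)) := by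
  have hn : ‖t • ω‖ ^ 2 = t^2 * ‖ω‖^2 := by
    rw [norm_smul]; simp [mul_pow, sq_abs]
  rw [Rot, hn, S_smul_s12]
  simp [Matrix.add_apply, Matrix.smul_apply, Matrix.mul_apply, Fin.sum_univ_three]
  ring

lemma hasDerivAt_rot_entry (ω : V3) (i j : Fin 3) :
    HasDerivAt (fun t : ℝ => Rot (t • ω) i j) (S ω i j) 0 := by
  have h1 : HasDerivAt (fun t : ℝ => 4 / (4 + t^2 * ‖ω‖^2)) 0 0 := by
    have hg : HasDerivAt (fun t : ℝ => 4 + t^2 * ‖ω‖^2) 0 0 := by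
      simpa using ((hasDerivAt_pow 2 (0:ℝ)).mul_const (‖ω‖^2)).const_add 4
    simpa using (hasDerivAt_const (0:ℝ) (4:ℝ)).fun_div hg (by norm_num)
  have h2 : HasDerivAt (fun t : ℝ => t * S ω i j + t^2/2 * ((S ω * S ω) i j))
      (S ω i j) 0 := by
    have ha : HasDerivAt (fun t : ℝ => t * S ω i j) (S ω i j) 0 := by
      simpa using (hasDerivAt_id (0:ℝ)).mul_const (S ω i j)
    have hb : HasDerivAt (fun t : ℝ => t^2/2 * ((S ω * S ω) i j)) 0 0 := by
      simpa using ((hasDerivAt_pow 2 (0:ℝ)).div_const 2).mul_const ((S ω * S ω) i j)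
    simpa using ha.fun_add hb
  have := (hasDerivAt_const (0:ℝ) ((1:M3) i j)).fun_add (h1.fun_mul h2)
  simp only [Rot_smul_apply]
  simpa using this

lemma S_zero : S 0 = 0 := by
  ext i j
  fin_cases i <;> fin_cases j <;>
    simp [S, Matrix.vecHead, Matrix.vecTail]

lemma Rot_zero : Rot 0 = 1 := by
  rw [Rot, S_zero]
  simp

lemma hasDerivAt_curve (ω a : V3) :
    HasDerivAt (fun t : ℝ => mulV (Rot (t • ω)) a) (mulV (S ω) a) 0 := by
  have hco : HasDerivAt (fun t : ℝ => (fun j => ∑ k, Rot (t • ω) j k * a k : Fin 3 → ℝ))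
      (fun j => ∑ k, S ω j k * a k) 0 := by
    apply hasDerivAt_pi.2
    intro j
    have : HasDerivAt (fun t : ℝ => ∑ k, Rot (t • ω) j k * a k)
        (∑ k, S ω j k * a k) 0 :=
      HasDerivAt.fun_sum fun k _ => (hasDerivAt_rot_entry ω j k).mul_const _
    exact this
  have := ((EuclideanSpace.equiv (Fin 3) ℝ).symm.hasFDerivAt).comp_hasDerivAt 0 hco
  exact this

lemma pi_single_apply_clm {n : ℕ} (i : Fin n) (w : V3) :
    (ContinuousLinearMap.pi (Pi.single i (ContinuousLinearMap.id ℝ V3)) :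
      V3 →L[ℝ] (Fin n → V3)) w = Pi.single i w := by
  funext j
  rw [ContinuousLinearMap.pi_apply]
  rcases eq_or_ne j i with rfl | hne
  · simp
  · simp [Pi.single_eq_of_ne hne]

lemma torque (n : ℕ) (U : (Fin n → V3) → ℝ) (hU : Differentiable ℝ U)
    (hinv : ∀ (Q : M3), Qᵀ * Q = 1 → Q.det = 1 →
      ∀ x : Fin n → V3, U (fun i => mulV Q (x i)) = U x)
    (x : Fin n → V3) :
    (∑ i, (crossProduct (x i))
      ((gradient (fun y => U (Function.update x i y)) (x i) : V3)) : Fin 3 → ℝ) = 0 := by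
  set G : Fin n → V3 := fun i => gradient (fun y => U (Function.update x i y)) (x i) with hG
  have hfd : ∀ (i : Fin n) (w : V3), (inner ℝ (G i) w : ℝ) = fderiv ℝ U x (Pi.single i w) := by
    intro i w
    have hpartial : HasFDerivAt (fun y => U (Function.update x i y))
        ((fderiv ℝ U x).comp
          (ContinuousLinearMap.pi (Pi.single i (ContinuousLinearMap.id ℝ V3)))) (x i) := by
      have h1 : HasFDerivAt U (fderiv ℝ U x) (Function.update x i (x i)) := by
        rw [Function.update_eq_self]
        exact (hU x).hasFDerivAt
      exact h1.comp (x i) (hasFDerivAt_update x (x i))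
    have h2 : HasGradientAt (fun y => U (Function.update x i y)) (G i) (x i) :=
      hpartial.differentiableAt.hasGradientAt
    have h3 := h2.hasFDerivAt.unique hpartial
    have h4 := congrArg (fun (L : V3 →L[ℝ] ℝ) => L w) h3
    simp only [ContinuousLinearMap.comp_apply, pi_single_apply_clm,
      InnerProductSpace.toDual_apply_apply] at h4
    exact h4
  have hker : ∀ ω : V3, fderiv ℝ U x (fun i => mulV (S ω) (x i)) = 0 := by
    intro ω
    have hγ : HasDerivAt (fun t : ℝ => fun i => mulV (Rot (t • ω)) (x i))
        (fun i => mulV (S ω) (x i)) 0 := hasDerivAt_pi.2 fun i => hasDerivAt_curve ω (x i)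
    have hγ0 : (fun i => mulV (Rot ((0:ℝ) • ω)) (x i)) = x := by
      funext i
      simp [mulV, Rot_zero, Matrix.one_mulVec]
    have hUf : HasFDerivAt U (fderiv ℝ U x) (fun i => mulV (Rot ((0:ℝ) • ω)) (x i)) := by
      rw [hγ0]; exact (hU x).hasFDerivAt
    have hchain := hUf.comp_hasDerivAt 0 hγ
    have hconst : (fun t : ℝ => U (fun i => mulV (Rot (t • ω)) (x i))) = fun _ => U x := by
      funext t
      exact hinv (Rot (t • ω)) (Rot_orth _) (Rot_det _) x
    have hzero : HasDerivAt (fun t : ℝ => U (fun i => mulV (Rot (t • ω)) (x i))) 0 0 := by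
      rw [hconst]; exact hasDerivAt_const _ _
    exact hchain.unique hzero
  have hsum : ∀ ω : V3, (∑ i, (inner ℝ (G i) (mulV (S ω) (x i)) : ℝ)) = 0 := by
    intro ω
    have hd : (fun i => mulV (S ω) (x i)) = ∑ i, Pi.single i (mulV (S ω) (x i)) :=
      (Finset.univ_sum_single _).symm
    calc ∑ i, (inner ℝ (G i) (mulV (S ω) (x i)) : ℝ)
        = ∑ i, fderiv ℝ U x (Pi.single i (mulV (S ω) (x i))) :=
          Finset.sum_congr rfl fun i _ => hfd i _
      _ = fderiv ℝ U x (fun i => mulV (S ω) (x i)) := by rw [hd, map_sum]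
      _ = 0 := hker ω
  have htri : ∀ (ω g a : V3), (inner ℝ g (mulV (S ω) a) : ℝ) = inner ℝ ω (WithLp.toLp 2 ((crossProduct a) g)) := by
    intro ω g a
    simp [PiLp.inner_apply, mulV, Matrix.mulVec, dotProduct, S, cross_apply,
      Fin.sum_univ_three, conj_trivial]
    ring
  have hT : ∀ ω : V3, (inner ℝ ω (WithLp.toLp 2 (∑ i, (crossProduct (x i)) (G i))) : ℝ) = 0 := by
    intro ω
    rw [WithLp.toLp_sum, inner_sum]
    refine Eq.trans ?_ (hsum ω)
    exact Finset.sum_congr rfl fun i _ => (htri ω (G i) (x i)).symm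
  simpa using congrArg WithLp.ofLp (inner_self_eq_zero.mp (hT _))

lemma step_identity (μ h : ℝ) (hμ : μ ≠ 0) (a b f f' : V3) :
    μ • (crossProduct ((a + h • b + (h ^ 2 / (2 * μ)) • f : V3)))
        ((b + (h / (2 * μ)) • (f + f') : V3))
      = μ • (crossProduct a) b + (h/2) • (crossProduct a) f
        + (h/2) • (crossProduct ((a + h • b + (h ^ 2 / (2 * μ)) • f : V3))) f' := by
  have hbb : (crossProduct b) b = 0 := cross_self b
  have hff : (crossProduct f) f = 0 := cross_self f
  have hfb : (crossProduct f) b = -((crossProduct b) f) := by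
    rw [← cross_anticomm]
  simp only [WithLp.ofLp_add, WithLp.ofLp_smul, map_add, _root_.map_smul, LinearMap.add_apply, LinearMap.smul_apply, smul_add,
    smul_smul, hbb, hff, hfb, smul_neg, smul_zero, add_zero]
  match_scalars <;> field_simp <;> ring



/-- Exact conservation of total angular momentum by the velocity Verlet
(explicit Newmark) map when the potential is invariant under rotations. -/
theorem stmt12 (n : ℕ) (hn : 1 ≤ n) (m : Fin n → ℝ) (hm : ∀ i, 0 < m i)
    (U : (Fin n → V3) → ℝ) (hU : Differentiable ℝ U)
    (hinv : ∀ (Q : M3), Qᵀ * Q = 1 → Q.det = 1 →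
      ∀ x : Fin n → V3, U (fun i => mulV Q (x i)) = U x)
    (F : Fin n → (Fin n → V3) → V3)
    (hF : ∀ i x, F i x = - gradient (fun y => U (Function.update x i y)) (x i))
    (h : ℝ) (hh : 0 < h) (x v : ℕ → Fin n → V3)
    (hx : ∀ k i, x (k + 1) i = x k i + h • v k i + (h ^ 2 / (2 * m i)) • F i (x k))
    (hv : ∀ k i, v (k + 1) i = v k i + (h / (2 * m i)) • (F i (x k) + F i (x (k + 1)))) :
    ∀ k, ∑ i, m i • crossProduct (x k i) (v k i) =
      ∑ i, m i • crossProduct (x 0 i) (v 0 i) := by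
  have torque0 : ∀ z : Fin n → V3, (∑ i, (crossProduct (z i)) (F i z)) = (0 : Fin 3 → ℝ) := by
    intro z
    have ht : (∑ i, (crossProduct (z i))
        ((gradient (fun y => U (Function.update z i y)) (z i) : V3)))
          = (0 : Fin 3 → ℝ) := torque n U hU hinv z
    calc (∑ i, (crossProduct (z i)) (F i z))
        = ∑ i, -((crossProduct (z i))
            ((gradient (fun y => U (Function.update z i y)) (z i) : V3))) := by
          refine Finset.sum_congr rfl fun i _ => ?_
          rw [hF i z]
          exact map_neg _ _
      _ = -(∑ i, (crossProduct (z i))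
            ((gradient (fun y => U (Function.update z i y)) (z i) : V3))) := by
          rw [Finset.sum_neg_distrib]
      _ = 0 := by rw [ht, neg_zero]
  intro k
  induction k with
  | zero => rfl
  | succ k ih =>
    rw [← ih]
    have hstep : ∀ i, m i • (crossProduct (x (k+1) i)) (v (k+1) i)
        = m i • (crossProduct (x k i)) (v k i)
          + (h/2) • (crossProduct (x k i)) (F i (x k))
          + (h/2) • (crossProduct (x (k+1) i)) (F i (x (k+1))) := by
      intro i
      rw [hx k i, hv k i]
      exact step_identity (m i) h (ne_of_gt (hm i)) (x k i) (v k i) (F i (x k)) (F i (x (k+1)))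
    calc (∑ i, m i • (crossProduct (x (k+1) i)) (v (k+1) i))
        = ∑ i, (m i • (crossProduct (x k i)) (v k i)
            + (h/2) • (crossProduct (x k i)) (F i (x k))
            + (h/2) • (crossProduct (x (k+1) i)) (F i (x (k+1)))) :=
          Finset.sum_congr rfl fun i _ => hstep i
      _ = (∑ i, m i • (crossProduct (x k i)) (v k i))
          + (h/2) • (∑ i, (crossProduct (x k i)) (F i (x k)))
          + (h/2) • (∑ i, (crossProduct (x (k+1) i)) (F i (x (k+1)))) := by
          rw [Finset.sum_add_distrib, Finset.sum_add_distrib, Finset.smul_sum, Finset.smul_sum]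
      _ = ∑ i, m i • (crossProduct (x k i)) (v k i) := by
          rw [torque0 (x k), torque0 (x (k+1))]
          simp
end
end
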